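/- Let {(x_i, y_i)}_{i=1}^n be a finite dataset with x_i ∈ ℝ^d and y_i ∈ ℝ, let R_ERM(w) = (1/n) Σ_{i=1}^n (y_i − wᵀx_i)², and let x̄ = (1/n) Σ_i x_i, ȳ = (1/n) Σ_i y_i. Let λ be a [0,1]-valued random variable distributed as Beta(α, α) for some α > 0 (so that E[λ] = 1/2), set c_α = E[λ(1−λ)], and let i, j be independent indices uniform on {1,…,n}, independent of λ. Define the Mixup risk R_Mixup(w) = E_{i,j,λ}[(ỹ − wᵀx̃)²] with x̃ = λx_i + (1−λ)x_j and ỹ = λy_i + (1−λ)y_j. Then for every w ∈ ℝ^d, R_Mixup(w) = (1 − 2c_α) R_ERM(w) + 2c_α (ȳ − wᵀx̄)². -/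

import Mathlib

open MeasureTheory ProbabilityTheory Finset

/-- **Mixup risk decomposition for linear least squares.**
Let `lam` be a `[0,1]`-valued random variable with mean `1/2` (as holds for
`lam ~ Beta(α,α)`), and `c = E[lam(1-lam)]`.  Then the Mixup risk of a linear
model satisfies `R_Mixup(w) = (1 - 2c) R_ERM(w) + 2c (ȳ - wᵀx̄)²`. -/
theorem mixup_risk_eq
    {Ω : Type*} [MeasurableSpace Ω] (P : Measure Ω) [IsProbabilityMeasure P]
    (d n : ℕ) (hn : 0 < n)
    (x : Fin n → Fin d → ℝ) (y : Fin n → ℝ)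
    (lam : Ω → ℝ) (hlam_meas : Measurable lam)
    (hlam_mem : ∀ ω, lam ω ∈ Set.Icc (0 : ℝ) 1)
    (hlam_mean : ∫ ω, lam ω ∂P = 1 / 2)
    (w : Fin d → ℝ) :
    (1 / (n : ℝ) ^ 2) * ∑ i, ∑ j, ∫ ω,
        (lam ω * y i + (1 - lam ω) * y j
          - ∑ k, w k * (lam ω * x i k + (1 - lam ω) * x j k)) ^ 2 ∂P
      = (1 - 2 * ∫ ω, lam ω * (1 - lam ω) ∂P)
          * ((1 / n : ℝ) * ∑ i, (y i - ∑ k, w k * x i k) ^ 2)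
        + 2 * (∫ ω, lam ω * (1 - lam ω) ∂P)
          * ((1 / n : ℝ) * ∑ i, y i - ∑ k, w k * ((1 / n : ℝ) * ∑ i, x i k)) ^ 2 := by
  classical
  set A : Fin n → ℝ := fun i => y i - ∑ k, w k * x i k with hA
  set C : ℝ := ∫ ω, lam ω * (1 - lam ω) ∂P with hC
  have hn' : (n : ℝ) ≠ 0 := Nat.cast_ne_zero.2 hn.ne'
  -- integrability facts
  have hIlam : Integrable lam P := by
    apply (integrable_const (1 : ℝ)).mono' hlam_meas.aestronglyMeasurable
    filter_upwards with ω
    rw [Real.norm_eq_abs, abs_of_nonneg (hlam_mem ω).1]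
    exact (hlam_mem ω).2
  have hIC : Integrable (fun ω => lam ω * (1 - lam ω)) P := by
    apply (integrable_const (1 : ℝ)).mono'
      (hlam_meas.mul ((measurable_const.sub hlam_meas))).aestronglyMeasurable
    filter_upwards with ω
    simp only [Pi.mul_apply, Pi.sub_apply]
    have h1 := (hlam_mem ω).1
    have h2 := (hlam_mem ω).2
    rw [Real.norm_eq_abs, abs_of_nonneg (by nlinarith)]
    nlinarith
  have hIsq : Integrable (fun ω => lam ω ^ 2) P := by
    apply (integrable_const (1 : ℝ)).mono' (hlam_meas.pow_const 2).aestronglyMeasurable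
    filter_upwards with ω
    have h1 := (hlam_mem ω).1
    have h2 := (hlam_mem ω).2
    rw [Real.norm_eq_abs, abs_of_nonneg (by positivity)]
    nlinarith
  have hIsq' : Integrable (fun ω => (1 - lam ω) ^ 2) P := by
    apply (integrable_const (1 : ℝ)).mono'
      ((measurable_const.sub hlam_meas).pow_const 2).aestronglyMeasurable
    filter_upwards with ω
    simp only [Pi.sub_apply]
    have h1 := (hlam_mem ω).1
    have h2 := (hlam_mem ω).2
    rw [Real.norm_eq_abs, abs_of_nonneg (by positivity)]
    nlinarith
  -- moment computations
  have hL2 : ∫ ω, lam ω ^ 2 ∂P = 1 / 2 - C := by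
    have : ∀ ω, lam ω ^ 2 = lam ω - lam ω * (1 - lam ω) := by intro ω; ring
    simp_rw [this]
    rw [integral_sub hIlam hIC, hlam_mean, hC]
  have hIm : Integrable (fun ω => 1 - lam ω) P := (integrable_const 1).sub hIlam
  have hM2 : ∫ ω, (1 - lam ω) ^ 2 ∂P = 1 / 2 - C := by
    have h1 : ∫ ω, (1 - lam ω) ∂P = 1 / 2 := by
      rw [integral_sub (integrable_const 1) hIlam, integral_const, hlam_mean]
      simp; norm_num
    calc ∫ ω, (1 - lam ω) ^ 2 ∂P
        = ∫ ω, ((1 - lam ω) - lam ω * (1 - lam ω)) ∂P := by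
          congr 1; funext ω; ring
      _ = (∫ ω, (1 - lam ω) ∂P) - ∫ ω, lam ω * (1 - lam ω) ∂P := integral_sub hIm hIC
      _ = 1 / 2 - C := by rw [h1, hC]
  -- inner integral
  have key : ∀ i j, (∫ ω,
      (lam ω * y i + (1 - lam ω) * y j
        - ∑ k, w k * (lam ω * x i k + (1 - lam ω) * x j k)) ^ 2 ∂P)
      = A i ^ 2 * (1 / 2 - C) + 2 * A i * A j * C + A j ^ 2 * (1 / 2 - C) := by
    intro i j
    have hpt : ∀ ω, (lam ω * y i + (1 - lam ω) * y j
        - ∑ k, w k * (lam ω * x i k + (1 - lam ω) * x j k)) ^ 2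
        = A i ^ 2 * lam ω ^ 2 + (2 * A i * A j) * (lam ω * (1 - lam ω))
          + A j ^ 2 * (1 - lam ω) ^ 2 := by
      intro ω
      have hs : ∑ k, w k * (lam ω * x i k + (1 - lam ω) * x j k)
          = lam ω * ∑ k, w k * x i k + (1 - lam ω) * ∑ k, w k * x j k := by
        rw [Finset.mul_sum, Finset.mul_sum, ← Finset.sum_add_distrib]
        exact Finset.sum_congr rfl fun k _ => by ring
      rw [hs]; simp only [hA]; ring
    simp_rw [hpt]
    have I1 : Integrable (fun ω => A i ^ 2 * lam ω ^ 2
        + 2 * A i * A j * (lam ω * (1 - lam ω))) P :=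
      (hIsq.const_mul _).add (hIC.const_mul _)
    have I2 : Integrable (fun ω => A i ^ 2 * lam ω ^ 2) P := hIsq.const_mul _
    have I3 : Integrable (fun ω => 2 * A i * A j * (lam ω * (1 - lam ω))) P :=
      hIC.const_mul _
    rw [integral_add I1 (hIsq'.const_mul _), integral_add I2 I3,
      integral_const_mul, integral_const_mul, integral_const_mul, hL2, hM2, ← hC]
  simp_rw [key]
  -- sums
  set S : ℝ := ∑ i, A i with hS
  set Q : ℝ := ∑ i, A i ^ 2 with hQ
  have hinner : ∀ i : Fin n, ∑ j, (A i ^ 2 * (1 / 2 - C) + 2 * A i * A j * C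
      + A j ^ 2 * (1 / 2 - C))
      = n * (A i ^ 2 * (1 / 2 - C)) + 2 * A i * C * S + (1 / 2 - C) * Q := by
    intro i
    rw [Finset.sum_add_distrib, Finset.sum_add_distrib, Finset.sum_const,
      Finset.card_univ, Fintype.card_fin, nsmul_eq_mul]
    congr 1
    · congr 1
      calc ∑ j, 2 * A i * A j * C = ∑ j, (2 * A i * C) * A j :=
            Finset.sum_congr rfl fun j _ => by ring
        _ = 2 * A i * C * S := by rw [← Finset.mul_sum]
    · calc ∑ j, A j ^ 2 * (1 / 2 - C) = ∑ j, (1 / 2 - C) * A j ^ 2 :=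
            Finset.sum_congr rfl fun j _ => by ring
        _ = (1 / 2 - C) * Q := by rw [← Finset.mul_sum]
  simp_rw [hinner]
  have houter : ∑ i : Fin n, ((n : ℝ) * (A i ^ 2 * (1 / 2 - C)) + 2 * A i * C * S
      + (1 / 2 - C) * Q)
      = (n : ℝ) * (1 / 2 - C) * Q + 2 * C * S ^ 2 + (n : ℝ) * (1 / 2 - C) * Q := by
    rw [Finset.sum_add_distrib, Finset.sum_add_distrib, Finset.sum_const,
      Finset.card_univ, Fintype.card_fin, nsmul_eq_mul]
    have h1 : ∑ i, ((n : ℝ) * (A i ^ 2 * (1 / 2 - C))) = (n : ℝ) * (1 / 2 - C) * Q := by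
      rw [← Finset.mul_sum]
      calc (n:ℝ) * ∑ i, A i ^ 2 * (1/2 - C) = (n:ℝ) * ((1/2 - C) * Q) := by
            rw [show ∑ i, A i ^ 2 * (1/2-C) = (1/2-C) * Q by
              rw [Finset.mul_sum]; exact Finset.sum_congr rfl fun i _ => by ring]
        _ = (n:ℝ) * (1/2 - C) * Q := by ring
    have h2 : ∑ i, (2 * A i * C * S) = 2 * C * S ^ 2 := by
      calc ∑ i, (2 * A i * C * S) = ∑ i, (2 * C * S) * A i :=
            Finset.sum_congr rfl fun i _ => by ring
        _ = 2 * C * S * S := by rw [← Finset.mul_sum]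
        _ = 2 * C * S ^ 2 := by ring
    rw [h1, h2]; ring
  rw [houter]
  -- bar identity
  have hbar : (1 / n : ℝ) * ∑ i, y i - ∑ k, w k * ((1 / n : ℝ) * ∑ i, x i k)
      = (1 / n : ℝ) * S := by
    have hswap : ∑ k, w k * ((1 / n : ℝ) * ∑ i, x i k)
        = (1 / n : ℝ) * ∑ i, ∑ k, w k * x i k := by
      calc ∑ k, w k * ((1 / n : ℝ) * ∑ i, x i k)
          = ∑ k, ∑ i, (1 / n : ℝ) * (w k * x i k) := by
            refine Finset.sum_congr rfl fun k _ => ?_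
            rw [Finset.mul_sum, Finset.mul_sum]
            exact Finset.sum_congr rfl fun i _ => by ring
        _ = ∑ i, ∑ k, (1 / n : ℝ) * (w k * x i k) := Finset.sum_comm
        _ = (1 / n : ℝ) * ∑ i, ∑ k, w k * x i k := by
            rw [Finset.mul_sum]
            exact Finset.sum_congr rfl fun i _ => by rw [Finset.mul_sum]
    rw [hswap, hS]
    simp only [hA, Finset.sum_sub_distrib]
    ring
  rw [hbar]
  field_simp
  ring
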